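/- Let n ≥ 1. Suppose f·log f is integrable and, for each i ∈ {1,…,n}, f_(i)·log f_(i) is integrable. Then the Shannon entropy of a perfect ranked set sample of size n is at most that of a simple random sample of the same size: Σ_{i=1}^n H(f_(i)) ≤ n·H(f), with equality when n = 1. -/

import Mathlib

open MeasureTheory Real

/-- Cumulative distribution function of a density `f`. -/
noncomputable def cdfOf (f : ℝ → ℝ) (x : ℝ) : ℝ := ∫ t in Set.Iic x, f t

/-- Density of the `i`-th order statistic from a sample of size `n` with parent density `f`:
`f_(i)(x) = i·C(n,i)·F(x)^(i-1)·(1-F(x))^(n-i)·f(x)`. -/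
noncomputable def osDen (f : ℝ → ℝ) (n i : ℕ) (x : ℝ) : ℝ :=
  (i : ℝ) * (n.choose i : ℝ) * (cdfOf f x) ^ (i - 1) * (1 - cdfOf f x) ^ (n - i) * f x

/-- Shannon entropy of a density `g`. -/
noncomputable def shannonH (g : ℝ → ℝ) : ℝ := -∫ x, g x * Real.log (g x)

/-- `t - 1 ≤ t log t` for `t ≥ 0`. -/
lemma sub_one_le_mul_log {t : ℝ} (ht : 0 ≤ t) : t - 1 ≤ t * Real.log t := by
  rcases eq_or_lt_of_le ht with h | h
  · simp [← h]
  · have h1 : Real.log t⁻¹ ≤ t⁻¹ - 1 := Real.log_le_sub_one_of_pos (by positivity)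
    rw [Real.log_inv] at h1
    have h2 : 1 - t⁻¹ ≤ Real.log t := by linarith
    have h3 : t * (1 - t⁻¹) ≤ t * Real.log t :=
      mul_le_mul_of_nonneg_left h2 ht
    have h4 : t * (1 - t⁻¹) = t - 1 := by
      field_simp
    linarith [h3, h4.symm ▸ h3]

/-- The polynomial identity `∑_{i=1}^n i·C(n,i)·u^(i-1)·(1-u)^(n-i) = n`. -/
lemma sum_osWeight (n : ℕ) (hn : 1 ≤ n) (u : ℝ) :
    ∑ i ∈ Finset.Icc 1 n, (i : ℝ) * (n.choose i : ℝ) * u ^ (i - 1) * (1 - u) ^ (n - i)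
      = (n : ℝ) := by
  have hIcc : Finset.Icc 1 n = Finset.Ico 1 (n + 1) := by
    rw [Finset.Ico_add_one_right_eq_Icc]
  rw [hIcc, Finset.sum_Ico_eq_sum_range]
  simp only [Nat.add_sub_cancel]
  have key : ∀ j : ℕ, ((1 + j : ℕ) : ℝ) * ((n.choose (1 + j) : ℕ) : ℝ)
      = (n : ℝ) * (((n - 1).choose j : ℕ) : ℝ) := by
    intro j
    have h := Nat.add_one_mul_choose_eq (n - 1) j
    rw [Nat.sub_add_cancel hn] at h
    have : (n * (n - 1).choose j : ℕ) = (n.choose (j + 1) * (j + 1) : ℕ) := h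
    have hcast := congrArg (Nat.cast : ℕ → ℝ) this
    push_cast at hcast ⊢
    rw [Nat.add_comm 1 j]
    linarith [hcast]
  have hexp : ∀ j : ℕ, (1 + j) - 1 = j := fun j => by omega
  have hexp2 : ∀ j : ℕ, n - (1 + j) = (n - 1) - j := fun j => by omega
  calc ∑ j ∈ Finset.range n, ((1 + j : ℕ) : ℝ) * (n.choose (1 + j) : ℝ)
        * u ^ ((1 + j) - 1) * (1 - u) ^ (n - (1 + j))
      = ∑ j ∈ Finset.range n, (n : ℝ) * (((n - 1).choose j : ℕ) : ℝ)
        * u ^ j * (1 - u) ^ ((n - 1) - j) := by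
        refine Finset.sum_congr rfl fun j _ => ?_
        rw [key j, hexp j, hexp2 j]
    _ = (n : ℝ) * ∑ j ∈ Finset.range n, u ^ j * (1 - u) ^ ((n - 1) - j)
        * (((n - 1).choose j : ℕ) : ℝ) := by
        rw [Finset.mul_sum]; refine Finset.sum_congr rfl fun j _ => by ring
    _ = (n : ℝ) := by
        have hrange : Finset.range n = Finset.range ((n - 1) + 1) := by
          congr 1; omega
        rw [hrange, ← add_pow u (1 - u) (n - 1)]
        simp

/-- If nonnegative reals indexed by a finset sum to the cardinality, then
`∑ aᵢ log aᵢ ≥ 0`. -/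
lemma sum_mul_log_nonneg {ι : Type*} (s : Finset ι) (a : ι → ℝ)
    (ha : ∀ i ∈ s, 0 ≤ a i) (hsum : ∑ i ∈ s, a i = (s.card : ℝ)) :
    0 ≤ ∑ i ∈ s, a i * Real.log (a i) := by
  have h : ∀ i ∈ s, a i - 1 ≤ a i * Real.log (a i) := fun i hi =>
    sub_one_le_mul_log (ha i hi)
  have := Finset.sum_le_sum h
  rw [Finset.sum_sub_distrib, hsum] at this
  simpa using this

lemma mul_log_decomp (a b : ℝ) :
    a ≠ 0 → b ≠ 0 → (a * b) * Real.log (a * b)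
      = b * (a * Real.log a) + a * (b * Real.log b) := by
  intro ha hb
  rw [Real.log_mul ha hb]; ring

theorem shannon_entropy_RSS_le_SRS (n : ℕ) (hn : 1 ≤ n) (f : ℝ → ℝ)
    (hf_meas : Measurable f) (hf_nonneg : ∀ x, 0 ≤ f x)
    (hf_int : ∫ x, f x = 1)
    (hfl : Integrable (fun x => f x * Real.log (f x)))
    (hil : ∀ i ∈ Finset.Icc 1 n,
      Integrable (fun x => osDen f n i x * Real.log (osDen f n i x))) :
    (∑ i ∈ Finset.Icc 1 n, shannonH (osDen f n i)) ≤ (n : ℝ) * shannonH f ∧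
      (n = 1 → (∑ i ∈ Finset.Icc 1 n, shannonH (osDen f n i)) = (n : ℝ) * shannonH f) := by
  -- integrability of f
  have hf_integrable : Integrable f := by
    by_contra h
    rw [integral_undef h] at hf_int
    norm_num at hf_int
  -- CDF bounds
  have hF0 : ∀ x, 0 ≤ cdfOf f x := fun x =>
    setIntegral_nonneg measurableSet_Iic (fun t _ => hf_nonneg t)
  have hF1 : ∀ x, cdfOf f x ≤ 1 := fun x => by
    rw [← hf_int]
    exact setIntegral_le_integral hf_integrable (Filter.Eventually.of_forall hf_nonneg)
  -- weights
  set a : ℕ → ℝ → ℝ := fun i x =>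
    (i : ℝ) * (n.choose i : ℝ) * (cdfOf f x) ^ (i - 1) * (1 - cdfOf f x) ^ (n - i) with ha_def
  have ha_nonneg : ∀ i x, 0 ≤ a i x := fun i x => by
    have h1 : (0:ℝ) ≤ cdfOf f x := hF0 x
    have h2 : (0:ℝ) ≤ 1 - cdfOf f x := by linarith [hF1 x]
    positivity
  have hos : ∀ i x, osDen f n i x = a i x * f x := fun i x => rfl
  have ha_sum : ∀ x, ∑ i ∈ Finset.Icc 1 n, a i x = (n : ℝ) := fun x =>
    sum_osWeight n hn (cdfOf f x)
  -- entropy sum function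
  set T : ℝ → ℝ := fun x => ∑ i ∈ Finset.Icc 1 n, a i x * Real.log (a i x) with hT_def
  have hT_nonneg : ∀ x, 0 ≤ T x := fun x => by
    have hcard : (Finset.Icc 1 n).card = n := by
      rw [Nat.card_Icc]; omega
    exact sum_mul_log_nonneg _ _ (fun i _ => ha_nonneg i x)
      (by rw [ha_sum x, hcard])
  -- pointwise decomposition
  have hpt : ∀ x, (∑ i ∈ Finset.Icc 1 n, osDen f n i x * Real.log (osDen f n i x))
      = f x * T x + (n : ℝ) * (f x * Real.log (f x)) := by
    intro x
    have hdec : ∀ i ∈ Finset.Icc 1 n,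
        osDen f n i x * Real.log (osDen f n i x)
          = f x * (a i x * Real.log (a i x)) + a i x * (f x * Real.log (f x)) := by
      intro i _
      rw [hos]
      rcases eq_or_ne (a i x) 0 with h | h
      · simp [h]
      rcases eq_or_ne (f x) 0 with h2 | h2
      · simp [h2]
      · exact mul_log_decomp _ _ h h2
    rw [Finset.sum_congr rfl hdec, Finset.sum_add_distrib, ← Finset.mul_sum,
      ← Finset.sum_mul, ha_sum x]
  -- main inequality on integrals
  have h1 : Integrable (fun x => ∑ i ∈ Finset.Icc 1 n,
      osDen f n i x * Real.log (osDen f n i x)) :=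
    integrable_finset_sum _ (fun i hi => hil i hi)
  have h2 : Integrable (fun x => (n : ℝ) * (f x * Real.log (f x))) := hfl.const_mul _
  have hdiff_nonneg : 0 ≤ ∫ x, ((∑ i ∈ Finset.Icc 1 n,
      osDen f n i x * Real.log (osDen f n i x)) - (n : ℝ) * (f x * Real.log (f x))) := by
    apply integral_nonneg
    intro x
    simp only [Pi.zero_apply]
    rw [hpt x]
    have := mul_nonneg (hf_nonneg x) (hT_nonneg x)
    linarith
  rw [integral_sub h1 h2, integral_finset_sum _ (fun i hi => hil i hi),
    integral_const_mul] at hdiff_nonneg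
  have hkey : (n : ℝ) * ∫ x, f x * Real.log (f x)
      ≤ ∑ i ∈ Finset.Icc 1 n, ∫ x, osDen f n i x * Real.log (osDen f n i x) := by
    linarith
  constructor
  · have : ∑ i ∈ Finset.Icc 1 n, shannonH (osDen f n i)
        = -(∑ i ∈ Finset.Icc 1 n, ∫ x, osDen f n i x * Real.log (osDen f n i x)) := by
      rw [← Finset.sum_neg_distrib]
      rfl
    rw [this, shannonH, mul_neg]
    linarith
  · intro hn1
    subst hn1
    have hone : osDen f 1 1 = f := by
      funext x
      simp [osDen]
    rw [show Finset.Icc 1 1 = {1} from rfl, Finset.sum_singleton, hone]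
    simp
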